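/- Let (X, B, μ, α) be an invertible ergodic measure-preserving system and f ∈ L²(X) with ∫ f dμ = 0. Under the Gordin conditions Σ_{n>0} ‖E(f | A_n)‖₂ < ∞ and Σ_{n<0} ‖f − E(f | A_n)‖₂ < ∞ (for a non-increasing filtration A_n = α^{−n}(A)), f admits a decomposition f = (φ∘α − φ) + ψ with φ, ψ ∈ L²(X), where ψ∘α^n is a reverse martingale difference sequence with respect to the σ-algebras A_n. -/

import Mathlib

open MeasureTheory Filter

section Helpers

/-- Telescoping tsum. -/
lemma gordin_tsum_telescope {E : Type*} [NormedAddCommGroup E] [CompleteSpace E] {c : ℕ → E}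
    (hs : Summable (fun m => c m - c (m + 1))) (h0 : Tendsto c atTop (nhds 0)) :
    ∑' m, (c m - c (m + 1)) = c 0 := by
  have h1 := hs.hasSum.tendsto_sum_nat
  have h2 : Tendsto (fun N => ∑ i ∈ Finset.range N, (c i - c (i + 1))) atTop (nhds (c 0)) := by
    have : Tendsto (fun N => c 0 - c N) atTop (nhds (c 0 - 0)) :=
      tendsto_const_nhds.sub h0
    simpa [Finset.sum_range_sub' c] using this
  simpa using tendsto_nhds_unique h1 h2

/-- Conditional expectation commutes with composition by a measure-preserving
measurable equivalence. -/
lemma gordin_condexp_comp {X : Type*} {m : MeasurableSpace X} [m0 : MeasurableSpace X]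
    {μ : Measure X} (e : X ≃ᵐ X) (he : MeasurePreserving (⇑e) μ μ)
    [IsProbabilityMeasure μ] (hm : m ≤ m0)
    {g : X → ℝ} (hg : Integrable g μ) :
    (fun x => (μ[g|m]) (e x)) =ᵐ[μ] μ[(fun x => g (e x)) | m.comap e] := by
  have hm' : m.comap e ≤ m0 :=
    (MeasurableSpace.comap_mono hm).trans (measurable_iff_comap_le.mp e.measurable)
  have hge : Integrable (fun x => g (e x)) μ :=
    (he.integrable_comp hg.aestronglyMeasurable).mpr hg
  refine ae_eq_condExp_of_forall_setIntegral_eq hm' hge ?_ ?_ ?_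
  · intro s _ _
    have : Integrable ((μ[g|m]) ∘ e) μ :=
      (he.integrable_comp integrable_condExp.aestronglyMeasurable).mpr integrable_condExp
    exact this.integrableOn
  · rintro s ⟨t, ht, rfl⟩ -
    rw [he.setIntegral_preimage_emb e.measurableEmbedding (μ[g|m]) t,
      he.setIntegral_preimage_emb e.measurableEmbedding g t]
    exact setIntegral_condExp hm hg ht
  · refine ⟨(μ[g|m]) ∘ e, ?_, Filter.EventuallyEq.rfl⟩
    exact (stronglyMeasurable_condExp (m := m)).comp_measurable
      (measurable_iff_comap_le.mpr le_rfl)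

end Helpers

section POp

variable {X : Type*} {m : MeasurableSpace X} [m0 : MeasurableSpace X] {μ : Measure X}

/-- Conditional expectation as a continuous linear map on `L²`. -/
noncomputable def gordinP (μ : Measure X) (hm : m ≤ m0) : Lp ℝ 2 μ →L[ℝ] Lp ℝ 2 μ :=
  (lpMeas ℝ ℝ m 2 μ).subtypeL.comp (condExpL2 ℝ ℝ hm)

lemma norm_gordinP_le (hm : m ≤ m0) (g : Lp ℝ 2 μ) : ‖gordinP μ hm g‖ ≤ ‖g‖ := by
  have h := norm_condExpL2_le (𝕜 := ℝ) (E := ℝ) hm g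
  simpa [gordinP] using h

lemma aesm_gordinP (hm : m ≤ m0) (g : Lp ℝ 2 μ) :
    AEStronglyMeasurable[m] (⇑(gordinP μ hm g)) μ :=
  aestronglyMeasurable_condExpL2 hm g

lemma coe_gordinP [IsProbabilityMeasure μ] (hm : m ≤ m0) (g : Lp ℝ 2 μ) :
    ⇑(gordinP μ hm g) =ᵐ[μ] μ[⇑g | m] := by
  haveI : SigmaFinite (μ.trim hm) := inferInstance
  refine ae_eq_condExp_of_forall_setIntegral_eq hm ((Lp.memLp g).integrable one_le_two)
    ?_ ?_ ?_
  · intro s _ hs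
    exact (integrable_condExpL2_of_isFiniteMeasure (𝕜 := ℝ) hm (f := g)).integrableOn
  · intro s hs hμs
    exact integral_condExpL2_eq (𝕜 := ℝ) hm g hs hμs.ne
  · exact aestronglyMeasurable_condExpL2 hm g

lemma gordinP_of_aesm [IsProbabilityMeasure μ] (hm : m ≤ m0) {g : Lp ℝ 2 μ}
    (h : AEStronglyMeasurable[m] (⇑g) μ) : gordinP μ hm g = g := by
  haveI : SigmaFinite (μ.trim hm) := inferInstance
  exact Lp.ext ((coe_gordinP hm g).trans
    (condExp_of_aestronglyMeasurable' hm h ((Lp.memLp g).integrable one_le_two)))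

lemma gordinP_of_le {X : Type*} {m m' : MeasurableSpace X} [m0 : MeasurableSpace X]
    {μ : Measure X} [IsProbabilityMeasure μ] (hm'm : m' ≤ m)
    (hm : m ≤ m0) (hm' : m' ≤ m0) (g : Lp ℝ 2 μ) :
    gordinP μ hm (gordinP μ hm' g) = gordinP μ hm' g :=
  gordinP_of_aesm hm ((aesm_gordinP hm' g).mono hm'm)

lemma gordinP_tower {X : Type*} {m m' : MeasurableSpace X} [m0 : MeasurableSpace X]
    {μ : Measure X} [IsProbabilityMeasure μ] (hmm' : m ≤ m')
    (hm : m ≤ m0) (hm' : m' ≤ m0) (g : Lp ℝ 2 μ) :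
    gordinP μ hm (gordinP μ hm' g) = gordinP μ hm g := by
  haveI : SigmaFinite (μ.trim hm') := inferInstance
  refine Lp.ext ?_
  calc ⇑(gordinP μ hm (gordinP μ hm' g)) =ᵐ[μ] μ[⇑(gordinP μ hm' g)|m] :=
        coe_gordinP hm _
    _ =ᵐ[μ] μ[μ[⇑g|m']|m] := condExp_congr_ae (coe_gordinP hm' g)
    _ =ᵐ[μ] μ[⇑g|m] := condExp_condExp_of_le hmm' hm'
    _ =ᵐ[μ] ⇑(gordinP μ hm g) := (coe_gordinP hm g).symm

lemma gordinP_comp [IsProbabilityMeasure μ] (e : X ≃ᵐ X) (he : MeasurePreserving (⇑e) μ μ)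
    (hm : m ≤ m0) (hm' : m.comap (⇑e) ≤ m0) (g : Lp ℝ 2 μ) :
    Lp.compMeasurePreserving (⇑e) he (gordinP μ hm g)
      = gordinP (m := m.comap (⇑e)) μ hm' (Lp.compMeasurePreserving (⇑e) he g) := by
  refine Lp.ext ?_
  calc ⇑(Lp.compMeasurePreserving (⇑e) he (gordinP μ hm g))
      =ᵐ[μ] (⇑(gordinP μ hm g)) ∘ ⇑e := Lp.coeFn_compMeasurePreserving _ he
    _ =ᵐ[μ] (fun x => (μ[⇑g|m]) (e x)) :=
        he.quasiMeasurePreserving.ae_eq_comp (coe_gordinP hm g)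
    _ =ᵐ[μ] μ[(fun x => g (e x)) | m.comap (⇑e)] :=
        gordin_condexp_comp e he hm ((Lp.memLp g).integrable one_le_two)
    _ =ᵐ[μ] μ[⇑(Lp.compMeasurePreserving (⇑e) he g) | m.comap (⇑e)] :=
        condExp_congr_ae ((Lp.coeFn_compMeasurePreserving g he).symm)
    _ =ᵐ[μ] ⇑(gordinP (m := m.comap (⇑e)) μ hm' (Lp.compMeasurePreserving (⇑e) he g)) :=
        (coe_gordinP hm' _).symm

end POp

lemma gordinP_congr {X : Type*} {m1 m2 : MeasurableSpace X} [m0 : MeasurableSpace X]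
    {μ : Measure X} (h12 : m1 = m2) (h1 : m1 ≤ m0) (h2 : m2 ≤ m0) (g : Lp ℝ 2 μ) :
    gordinP μ h1 g = gordinP μ h2 g := by subst h12; rfl

/-- Abstract Gordin decomposition in a Banach space, in terms of a family of
"conditional expectation" projections `P n` and "Koopman" isometries `Q k`. -/
lemma gordin_abstract {E : Type*} [NormedAddCommGroup E] [NormedSpace ℝ E] [CompleteSpace E]
    (P Q : ℤ → E →L[ℝ] E) (F : E)
    (hQQ : ∀ (j k : ℤ) (g : E), Q j (Q k g) = Q (k + j) g)
    (hQ0 : ∀ g : E, Q 0 g = g)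
    (hQnorm : ∀ (k : ℤ) (g : E), ‖Q k g‖ = ‖g‖)
    (hcomm : ∀ (k n : ℤ) (g : E), Q k (P n g) = P (n + k) (Q k g))
    (hPnorm : ∀ (n : ℤ) (g : E), ‖P n g‖ ≤ ‖g‖)
    (hP00 : ∀ g : E, P 0 (P 0 g) = P 0 g)
    (hP01 : ∀ g : E, P 0 (P 1 g) = P 1 g)
    (hP11 : ∀ g : E, P 1 (P 1 g) = P 1 g)
    (hP10 : ∀ g : E, P 1 (P 0 g) = P 1 g)
    (Sa : Summable fun m : ℕ => ‖P ((m : ℤ) + 1) F‖)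
    (Sb : Summable fun m : ℕ => ‖F - P (-(m : ℤ) - 1) F‖) :
    ∃ φ ψ : E, Q 1 φ - φ + ψ = F ∧ P 0 ψ = ψ ∧ P 1 ψ = 0 := by
  have hnorm1 : ∀ (k n : ℤ) (g : E), ‖P (n + k) (Q k g)‖ = ‖P n g‖ := by
    intro k n g; rw [← hcomm, hQnorm]
  have hnorm2 : ∀ (k n : ℤ) (g : E), ‖Q k g - P (n + k) (Q k g)‖ = ‖g - P n g‖ := by
    intro k n g; rw [← hcomm, ← map_sub, hQnorm]
  -- shifted summability
  have Sa' : Summable fun m : ℕ => ‖P ((m : ℤ) + 2) F‖ := by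
    have h := (summable_nat_add_iff (f := fun m : ℕ => ‖P ((m : ℤ) + 1) F‖) 1).mpr Sa
    refine h.congr fun m => ?_
    rw [show ((m + 1 : ℕ) : ℤ) + 1 = (m : ℤ) + 2 by push_cast; ring]
  have Sb' : Summable fun m : ℕ => ‖F - P (-(m : ℤ)) F‖ := by
    refine (summable_nat_add_iff 1).mp (Sb.congr fun m => ?_)
    rw [show -((m + 1 : ℕ) : ℤ) = -(m : ℤ) - 1 by push_cast; ring]
  have Sb'' : Summable fun m : ℕ => ‖F - P (1 - (m : ℤ)) F‖ := by
    refine (summable_nat_add_iff 2).mp (Sb.congr fun m => ?_)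
    rw [show 1 - ((m + 2 : ℕ) : ℤ) = -(m : ℤ) - 1 by push_cast; ring]
  -- the four summands
  set u : ℕ → E := fun m => P 0 (Q (-(m : ℤ) - 1) F) with hud
  set v : ℕ → E := fun m => Q (m : ℤ) F - P 0 (Q (m : ℤ) F) with hvd
  set w : ℕ → E := fun m => P 0 (Q (-(m : ℤ) - 1) F) - P 1 (Q (-(m : ℤ) - 1) F) with hwd
  set z : ℕ → E := fun m => P 0 (Q (m : ℤ) F) - P 1 (Q (m : ℤ) F) with hzd
  -- norms of the summands
  have hu : ∀ m : ℕ, ‖u m‖ = ‖P ((m : ℤ) + 1) F‖ := by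
    intro m
    have h := hnorm1 (-(m : ℤ) - 1) ((m : ℤ) + 1) F
    rw [show (m : ℤ) + 1 + (-(m : ℤ) - 1) = 0 by ring] at h
    simpa [hud] using h
  have hv : ∀ m : ℕ, ‖v m‖ = ‖F - P (-(m : ℤ)) F‖ := by
    intro m
    have h := hnorm2 (m : ℤ) (-(m : ℤ)) F
    rw [show -(m : ℤ) + (m : ℤ) = 0 by ring] at h
    simpa [hvd] using h
  have hP1Q : ∀ m : ℕ, ‖P 1 (Q (-(m : ℤ) - 1) F)‖ = ‖P ((m : ℤ) + 2) F‖ := by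
    intro m
    have h := hnorm1 (-(m : ℤ) - 1) ((m : ℤ) + 2) F
    rw [show (m : ℤ) + 2 + (-(m : ℤ) - 1) = 1 by ring] at h
    rw [h]
  have hw : ∀ m : ℕ, ‖w m‖ ≤ ‖P ((m : ℤ) + 1) F‖ + ‖P ((m : ℤ) + 2) F‖ := by
    intro m
    rw [hwd]
    refine (norm_sub_le _ _).trans ?_
    rw [← hP1Q m, ← hu m, hud]
  have hz : ∀ m : ℕ, ‖z m‖ ≤ ‖F - P (1 - (m : ℤ)) F‖ := by
    intro m
    have hr : ‖Q (m : ℤ) F - P 1 (Q (m : ℤ) F)‖ = ‖F - P (1 - (m : ℤ)) F‖ := by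
      have h := hnorm2 (m : ℤ) (1 - (m : ℤ)) F
      rw [show 1 - (m : ℤ) + (m : ℤ) = 1 by ring] at h
      exact h
    have hzeq : z m = P 0 (Q (m : ℤ) F - P 1 (Q (m : ℤ) F)) := by
      rw [hzd]; simp only [map_sub, hP01]
    rw [hzeq, ← hr]
    exact hPnorm 0 _
  -- summability of the four series
  have su : Summable u := Summable.of_norm (Sa.congr fun m => (hu m).symm)
  have sv : Summable v := Summable.of_norm (Sb'.congr fun m => (hv m).symm)
  have sw : Summable w :=
    Summable.of_norm (Summable.of_nonneg_of_le (fun m => norm_nonneg _) hw (Sa.add Sa'))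
  have sz : Summable z :=
    Summable.of_norm (Summable.of_nonneg_of_le (fun m => norm_nonneg _) hz Sb'')
  -- telescoping sequences
  set a : ℕ → E := fun m => P 1 (Q (-(m : ℤ)) F) with had
  set b : ℕ → E := fun m => Q (m : ℤ) F - P 1 (Q (m : ℤ) F) with hbd
  have hanorm : ∀ m : ℕ, ‖a m‖ = ‖P ((m : ℤ) + 1) F‖ := by
    intro m
    have h := hnorm1 (-(m : ℤ)) ((m : ℤ) + 1) F
    rw [show (m : ℤ) + 1 + (-(m : ℤ)) = 1 by ring] at h
    simpa [had] using h
  have hbnorm : ∀ m : ℕ, ‖b m‖ = ‖F - P (1 - (m : ℤ)) F‖ := by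
    intro m
    have h := hnorm2 (m : ℤ) (1 - (m : ℤ)) F
    rw [show 1 - (m : ℤ) + (m : ℤ) = 1 by ring] at h
    simpa [hbd] using h
  have sa : Summable a := Summable.of_norm (Sa.congr fun m => (hanorm m).symm)
  have sb : Summable b := Summable.of_norm (Sb''.congr fun m => (hbnorm m).symm)
  have ha0 : Filter.Tendsto a Filter.atTop (nhds 0) := by
    rw [tendsto_zero_iff_norm_tendsto_zero]
    exact Sa.tendsto_atTop_zero.congr fun m => (hanorm m).symm
  have hb0 : Filter.Tendsto b Filter.atTop (nhds 0) := by
    rw [tendsto_zero_iff_norm_tendsto_zero]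
    exact Sb''.tendsto_atTop_zero.congr fun m => (hbnorm m).symm
  -- termwise telescoping identities
  have termA : ∀ m : ℕ, Q 1 (u m) - u m + w m = a m - a (m + 1) := by
    intro m
    have h1 : Q 1 (u m) = a m := by
      rw [hud, had]
      simp only
      rw [hcomm 1 0, hQQ 1 (-(m : ℤ) - 1) F,
        show (-(m : ℤ) - 1) + 1 = -(m : ℤ) by ring, zero_add]
    have h2 : a (m + 1) = P 1 (Q (-(m : ℤ) - 1) F) := by
      rw [had]
      simp only
      congr 2
      push_cast; ring
    rw [h1, h2, hud, hwd]
    beta_reduce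
    abel
  have termB : ∀ m : ℕ, v m - Q 1 (v m) + z m = b m - b (m + 1) := by
    intro m
    have h1 : Q 1 (v m) = b (m + 1) := by
      rw [hvd, hbd]
      simp only [map_sub]
      rw [hQQ 1 (m : ℤ) F, hcomm 1 0, hQQ 1 (m : ℤ) F, zero_add]
      congr 2 <;> push_cast <;> ring
    have h2 : v m + z m = b m := by
      rw [hvd, hzd, hbd]
      simp only
      abel
    rw [h1, ← h2]
    abel
  -- summability of telescoped series
  have sta : Summable (fun m : ℕ => a m - a (m + 1)) :=
    sa.sub ((summable_nat_add_iff 1).mpr sa)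
  have stb : Summable (fun m : ℕ => b m - b (m + 1)) :=
    sb.sub ((summable_nat_add_iff 1).mpr sb)
  -- the telescoped sums
  have SA : ∑' m : ℕ, (Q 1 (u m) - u m + w m) = a 0 := by
    rw [tsum_congr termA]
    exact gordin_tsum_telescope sta ha0
  have SB : ∑' m : ℕ, (v m - Q 1 (v m) + z m) = b 0 := by
    rw [tsum_congr termB]
    exact gordin_tsum_telescope stb hb0
  -- define φ and ψ
  refine ⟨(∑' m, u m) - (∑' m, v m), (∑' m, w m) + (∑' m, z m), ?_, ?_, ?_⟩
  · -- main identity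
    have hQu : Summable (fun m => Q 1 (u m)) := su.map (Q 1) (Q 1).continuous
    have hQv : Summable (fun m => Q 1 (v m)) := sv.map (Q 1) (Q 1).continuous
    have hA : ∑' m : ℕ, (Q 1 (u m) - u m + w m)
        = ((∑' m, Q 1 (u m)) - (∑' m, u m)) + (∑' m, w m) := by
      rw [Summable.tsum_add (hQu.sub su) sw, Summable.tsum_sub hQu su]
    have hB : ∑' m : ℕ, (v m - Q 1 (v m) + z m)
        = ((∑' m, v m) - (∑' m, Q 1 (v m))) + (∑' m, z m) := by
      rw [Summable.tsum_add (sv.sub hQv) sz, Summable.tsum_sub sv hQv]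
    have hmap_u : Q 1 (∑' m, u m) = ∑' m, Q 1 (u m) := (Q 1).map_tsum su
    have hmap_v : Q 1 (∑' m, v m) = ∑' m, Q 1 (v m) := (Q 1).map_tsum sv
    have key : Q 1 ((∑' m, u m) - (∑' m, v m)) - ((∑' m, u m) - (∑' m, v m))
        + ((∑' m, w m) + (∑' m, z m)) = a 0 + b 0 := by
      rw [map_sub, hmap_u, hmap_v, ← SA, ← SB, hA, hB]
      abel
    rw [key]
    have ha0' : a 0 = P 1 (Q 0 F) := by rw [had]; norm_num
    have hb0' : b 0 = Q 0 F - P 1 (Q 0 F) := by rw [hbd]; norm_num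
    rw [ha0', hb0', hQ0]
    abel
  · -- P 0 ψ = ψ
    have hw0 : ∀ m : ℕ, P 0 (w m) = w m := by
      intro m
      rw [hwd]
      simp only [map_sub, hP00, hP01]
    have hz0 : ∀ m : ℕ, P 0 (z m) = z m := by
      intro m
      rw [hzd]
      simp only [map_sub, hP00, hP01]
    rw [map_add, (P 0).map_tsum sw, (P 0).map_tsum sz, tsum_congr hw0, tsum_congr hz0]
  · -- P 1 ψ = 0
    have hw1 : ∀ m : ℕ, P 1 (w m) = 0 := by
      intro m
      rw [hwd]
      simp only [map_sub, hP10, hP11, sub_self]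
    have hz1 : ∀ m : ℕ, P 1 (z m) = 0 := by
      intro m
      rw [hzd]
      simp only [map_sub, hP10, hP11, sub_self]
    rw [map_add, (P 1).map_tsum sw, (P 1).map_tsum sz, tsum_congr hw1, tsum_congr hz1]
    simp
/-- (Gordin decomposition) Under the Gordin conditions, a zero-mean
`f ∈ L²` decomposes as `f = (φ∘α − φ) + ψ` with `φ, ψ ∈ L²`, where `ψ∘α^n` is a
reverse martingale difference sequence with respect to the σ-algebras `A_n`
(i.e. `ψ∘α^n` is `A_n`-measurable and `E(ψ∘α^n | A_{n+1}) = 0`). -/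
theorem gordin_martingale_coboundary_decomposition
    {X : Type*} [m0 : MeasurableSpace X]
    (μ : Measure X) [IsProbabilityMeasure μ]
    (α : X ≃ X) (hα : MeasurePreserving α μ μ) (hαsymm : MeasurePreserving α.symm μ μ)
    (herg : Ergodic α μ)
    (f : X → ℝ) (hf : MemLp f 2 μ) (hf0 : ∫ x, f x ∂μ = 0)
    (A : MeasurableSpace X) (hA : A ≤ m0)
    (An : ℤ → MeasurableSpace X)
    (hAn : ∀ n : ℤ, An n = MeasurableSpace.comap (fun x => (α ^ n : Equiv.Perm X) x) A)
    (hmono : ∀ n m : ℤ, n ≤ m → An m ≤ An n)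
    (h1 : Summable fun n : ℕ => (eLpNorm (μ[f | An ((n : ℤ) + 1)]) 2 μ).toReal)
    (h2 : Summable fun n : ℕ => (eLpNorm (f - μ[f | An (-(n : ℤ) - 1)]) 2 μ).toReal) :
    ∃ φ ψ : X → ℝ, MemLp φ 2 μ ∧ MemLp ψ 2 μ ∧
      (∀ᵐ x ∂μ, f x = (φ (α x) - φ x) + ψ x) ∧
      (∀ n : ℤ,
        (μ[(fun x => ψ ((α ^ n : Equiv.Perm X) x)) | An n]
          =ᵐ[μ] fun x => ψ ((α ^ n : Equiv.Perm X) x)) ∧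
        μ[(fun x => ψ ((α ^ n : Equiv.Perm X) x)) | An (n + 1)] =ᵐ[μ] 0) := by
  classical
  letI mX : MeasurableSpace X := m0
  -- the powers of α are measure preserving
  have hmp : ∀ k : ℤ, MeasurePreserving (fun x => (α ^ k : Equiv.Perm X) x) μ μ := by
    intro k
    induction k using Int.induction_on with
    | zero =>
        have h : (fun x => ((α ^ (0 : ℤ) : Equiv.Perm X)) x) = id := by
          funext x; simp
        rw [h]; exact MeasurePreserving.id μ
    | succ n ih =>
        have h : (fun x => ((α ^ ((n : ℤ) + 1) : Equiv.Perm X)) x)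
            = (fun x => ((α ^ (n : ℤ) : Equiv.Perm X)) x) ∘ (⇑α) := by
          funext x
          simp [zpow_add_one, Equiv.Perm.mul_apply]
        rw [h]; exact ih.comp hα
    | pred n ih =>
        have h : (fun x => ((α ^ (-(n : ℤ) - 1) : Equiv.Perm X)) x)
            = (fun x => ((α ^ (-(n : ℤ)) : Equiv.Perm X)) x) ∘ (⇑α.symm) := by
          funext x
          rw [zpow_sub_one]
          simp [Equiv.Perm.mul_apply, Equiv.Perm.inv_def]
        rw [h]; exact ih.comp hαsymm
  -- inverses of the powers
  have hpowinv : ∀ k : ℤ, ⇑((α ^ k : Equiv.Perm X).symm)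
      = (fun x => (α ^ (-k) : Equiv.Perm X) x) := by
    intro k
    have h : (α ^ (-k) : Equiv.Perm X) = (α ^ k : Equiv.Perm X)⁻¹ := zpow_neg α k
    rw [h, Equiv.Perm.inv_def]
  -- the powers as measurable equivalences
  let ek : ℤ → (X ≃ᵐ X) := fun k =>
    { toEquiv := (α ^ k : Equiv.Perm X)
      measurable_toFun := (hmp k).measurable
      measurable_invFun := by
        show Measurable ⇑((α ^ k : Equiv.Perm X).symm)
        rw [hpowinv k]; exact (hmp (-k)).measurable }
  have hek : ∀ k : ℤ, ⇑(ek k) = (fun x => (α ^ k : Equiv.Perm X) x) := fun k => rfl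
  have hem : ∀ k : ℤ, MeasurePreserving (⇑(ek k)) μ μ := fun k => hmp k
  -- the σ-algebras are sub-σ-algebras of m0
  have hAnle : ∀ n : ℤ, An n ≤ m0 := by
    intro n
    rw [hAn n]
    exact (MeasurableSpace.comap_mono hA).trans ((hmp n).measurable.comap_le)
  -- comap of the filtration by powers of α
  have hcomap : ∀ n k : ℤ, MeasurableSpace.comap (⇑(ek k)) (An n) = An (n + k) := by
    intro n k
    rw [hAn n, hAn (n + k), MeasurableSpace.comap_comp]
    congr 1
    funext x
    show (α ^ n : Equiv.Perm X) ((α ^ k : Equiv.Perm X) x) = (α ^ (n + k) : Equiv.Perm X) x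
    rw [← Equiv.Perm.mul_apply, ← zpow_add]
  -- the operators
  set Qc : ℤ → (Lp ℝ 2 μ →L[ℝ] Lp ℝ 2 μ) := fun k =>
    (Lp.compMeasurePreservingₗᵢ ℝ (⇑(ek k)) (hem k)).toContinuousLinearMap with hQcdef
  set Pc : ℤ → (Lp ℝ 2 μ →L[ℝ] Lp ℝ 2 μ) := fun n => gordinP μ (hAnle n) with hPcdef
  have hQc : ∀ (k : ℤ) (g : Lp ℝ 2 μ),
      Qc k g = Lp.compMeasurePreserving (⇑(ek k)) (hem k) g := fun k g => rfl
  have hPc : ∀ (n : ℤ) (g : Lp ℝ 2 μ), Pc n g = gordinP μ (hAnle n) g := fun n g => rfl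
  -- hypotheses of the abstract lemma
  have hQQ : ∀ (j k : ℤ) (g : Lp ℝ 2 μ), Qc j (Qc k g) = Qc (k + j) g := by
    intro j k g
    simp only [hQc]
    apply Lp.ext
    have h1 := Lp.coeFn_compMeasurePreserving
      (Lp.compMeasurePreserving (⇑(ek k)) (hem k) g) (hem j)
    have h2 := (hem j).quasiMeasurePreserving.ae_eq_comp
      (Lp.coeFn_compMeasurePreserving g (hem k))
    have h3 : (⇑g ∘ ⇑(ek k)) ∘ ⇑(ek j) = ⇑g ∘ ⇑(ek (k + j)) := by
      funext x
      show g ((α ^ k : Equiv.Perm X) ((α ^ j : Equiv.Perm X) x)) = _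
      rw [← Equiv.Perm.mul_apply, ← zpow_add]
      rfl
    have h4 : (⇑g ∘ ⇑(ek k)) ∘ ⇑(ek j) =ᵐ[μ] ⇑g ∘ ⇑(ek (k + j)) := h3 ▸ Filter.EventuallyEq.rfl
    exact ((h1.trans (h2.trans h4)).trans
      (Lp.coeFn_compMeasurePreserving g (hem (k + j))).symm)
  have hQ0 : ∀ g : Lp ℝ 2 μ, Qc 0 g = g := by
    intro g
    rw [hQc]
    apply Lp.ext
    refine (Lp.coeFn_compMeasurePreserving g (hem 0)).trans ?_
    have h : ⇑g ∘ ⇑(ek 0) = ⇑g := by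
      funext x
      show g ((α ^ (0 : ℤ) : Equiv.Perm X) x) = g x
      simp
    rw [h]
  have hQnorm : ∀ (k : ℤ) (g : Lp ℝ 2 μ), ‖Qc k g‖ = ‖g‖ := by
    intro k g
    rw [hQc]
    exact Lp.norm_compMeasurePreserving g (hem k)
  have hcomm : ∀ (k n : ℤ) (g : Lp ℝ 2 μ), Qc k (Pc n g) = Pc (n + k) (Qc k g) := by
    intro k n g
    have hle' : MeasurableSpace.comap (⇑(ek k)) (An n) ≤ m0 := by
      rw [hcomap n k]; exact hAnle (n + k)
    have h := gordinP_comp (ek k) (hem k) (hAnle n) hle' g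
    rw [hQc, hPc, hQc, hPc]
    exact h.trans (gordinP_congr (hcomap n k) hle' (hAnle (n + k)) _)
  have hPnorm : ∀ (n : ℤ) (g : Lp ℝ 2 μ), ‖Pc n g‖ ≤ ‖g‖ := by
    intro n g
    rw [hPc]
    exact norm_gordinP_le _ g
  have hA10 : An 1 ≤ An 0 := hmono 0 1 zero_le_one
  have hP00 : ∀ g : Lp ℝ 2 μ, Pc 0 (Pc 0 g) = Pc 0 g := by
    intro g; simp only [hPc]; exact gordinP_of_le le_rfl (hAnle 0) (hAnle 0) g
  have hP01 : ∀ g : Lp ℝ 2 μ, Pc 0 (Pc 1 g) = Pc 1 g := by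
    intro g; simp only [hPc]; exact gordinP_of_le hA10 (hAnle 0) (hAnle 1) g
  have hP11 : ∀ g : Lp ℝ 2 μ, Pc 1 (Pc 1 g) = Pc 1 g := by
    intro g; simp only [hPc]; exact gordinP_of_le le_rfl (hAnle 1) (hAnle 1) g
  have hP10 : ∀ g : Lp ℝ 2 μ, Pc 1 (Pc 0 g) = Pc 1 g := by
    intro g; simp only [hPc]; exact gordinP_tower hA10 (hAnle 1) (hAnle 0) g
  -- the function as an Lp element
  set F : Lp ℝ 2 μ := hf.toLp f with hFdef
  have hPF : ∀ n : ℤ, ‖Pc n F‖ = (eLpNorm (μ[f | An n]) 2 μ).toReal := by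
    intro n
    rw [Lp.norm_def]
    congr 1
    apply eLpNorm_congr_ae
    exact (coe_gordinP (hAnle n) F).trans (condExp_congr_ae (MemLp.coeFn_toLp hf))
  have hFP : ∀ n : ℤ, ‖F - Pc n F‖ = (eLpNorm (f - μ[f | An n]) 2 μ).toReal := by
    intro n
    rw [Lp.norm_def]
    congr 1
    apply eLpNorm_congr_ae
    refine (Lp.coeFn_sub F (Pc n F)).trans ?_
    exact (MemLp.coeFn_toLp hf).sub
      ((coe_gordinP (hAnle n) F).trans (condExp_congr_ae (MemLp.coeFn_toLp hf)))
  have SaF : Summable fun m : ℕ => ‖Pc ((m : ℤ) + 1) F‖ :=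
    h1.congr fun m => (hPF ((m : ℤ) + 1)).symm
  have SbF : Summable fun m : ℕ => ‖F - Pc (-(m : ℤ) - 1) F‖ :=
    h2.congr fun m => (hFP (-(m : ℤ) - 1)).symm
  -- apply the abstract decomposition
  obtain ⟨φL, ψL, hmain, hP0ψ, hP1ψ⟩ := gordin_abstract Pc Qc F hQQ hQ0 hQnorm hcomm
    hPnorm hP00 hP01 hP11 hP10 SaF SbF
  refine ⟨⇑φL, ⇑ψL, Lp.memLp φL, Lp.memLp ψL, ?_, ?_⟩
  · -- the coboundary decomposition
    rw [hQc 1 φL] at hmain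
    have hF : ⇑F =ᵐ[μ] ⇑(Lp.compMeasurePreserving (⇑(ek 1)) (hem 1) φL - φL + ψL) := by
      rw [hmain]
    filter_upwards [MemLp.coeFn_toLp hf, hF,
      Lp.coeFn_add (Lp.compMeasurePreserving (⇑(ek 1)) (hem 1) φL - φL) ψL,
      Lp.coeFn_sub (Lp.compMeasurePreserving (⇑(ek 1)) (hem 1) φL) φL,
      Lp.coeFn_compMeasurePreserving φL (hem 1)] with x hx1 hx2 hx3 hx4 hx5
    have hax : (⇑φL ∘ ⇑(ek 1)) x = φL (α x) := by
      show φL ((α ^ (1 : ℤ) : Equiv.Perm X) x) = φL (α x)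
      rw [zpow_one]
    rw [← hx1, ← hFdef, hx2, hx3, Pi.add_apply, hx4, Pi.sub_apply, hx5, hax]
  · -- the reverse martingale difference property
    intro n
    have hcoeQn : ⇑(Qc n ψL) =ᵐ[μ] (fun x => ψL ((α ^ n : Equiv.Perm X) x)) := by
      rw [hQc]
      exact Lp.coeFn_compMeasurePreserving ψL (hem n)
    have hPn : Pc n (Qc n ψL) = Qc n ψL := by
      have h := hcomm n 0 ψL
      rw [hP0ψ, zero_add] at h
      exact h.symm
    have hPn1 : Pc (n + 1) (Qc n ψL) = 0 := by
      have h := hcomm n 1 ψL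
      rw [hP1ψ, map_zero, add_comm 1 n] at h
      exact h.symm
    constructor
    · have e1 : μ[(fun x => ψL ((α ^ n : Equiv.Perm X) x)) | An n]
          =ᵐ[μ] μ[⇑(Qc n ψL) | An n] := condExp_congr_ae hcoeQn.symm
      have e2 : μ[⇑(Qc n ψL) | An n] =ᵐ[μ] ⇑(Pc n (Qc n ψL)) := by
        rw [hPc]
        exact (coe_gordinP (hAnle n) _).symm
      have e3 : ⇑(Pc n (Qc n ψL)) =ᵐ[μ] (fun x => ψL ((α ^ n : Equiv.Perm X) x)) := by
        rw [hPn]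
        exact hcoeQn
      exact e1.trans (e2.trans e3)
    · have e1 : μ[(fun x => ψL ((α ^ n : Equiv.Perm X) x)) | An (n + 1)]
          =ᵐ[μ] μ[⇑(Qc n ψL) | An (n + 1)] := condExp_congr_ae hcoeQn.symm
      have e2 : μ[⇑(Qc n ψL) | An (n + 1)] =ᵐ[μ] ⇑(Pc (n + 1) (Qc n ψL)) := by
        rw [hPc]
        exact (coe_gordinP (hAnle (n + 1)) _).symm
      have e3 : ⇑(Pc (n + 1) (Qc n ψL)) =ᵐ[μ] (0 : X → ℝ) := by
        rw [hPn1]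
        exact Lp.coeFn_zero ℝ 2 μ
      exact e1.trans (e2.trans e3)
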